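/- arXiv:1403.3885 — 2 statements merged into one kernel-verified Lean document; each statement's English description precedes it below -/
import Mathlib

section
/- For any network (polymatrix) coordination game, every solution p : [0,∞) → Δ of the replicator dynamics whose initial condition p(0) lies in the interior of Δ converges point-wise: there exists a single fixed point q ∈ Δ of the replicator dynamics such that p(t) → q as t → ∞. -/
open Filter Topology Finset

variable {V : Type} [Fintype V] [DecidableEq V] {T : Type} [Fintype T] [DecidableEq T]

/-- Expected utility `u_{iγ}(p)` of player `i` playing strategy `γ` in the network
(polymatrix) coordination game on the graph `G` with edge payoff matrices `A`. -/
def expUtil (G : SimpleGraph V) [DecidableRel G.Adj] (A : V → V → T → T → ℝ)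
    (p : V → T → ℝ) (i : V) (γ : T) : ℝ :=
  ∑ j ∈ G.neighborFinset i, ∑ δ, A i j γ δ * p j δ

/-- Expected utility `û_i(p) = Σ_γ p_{iγ} u_{iγ}(p)` of player `i`. -/
def avgUtil (G : SimpleGraph V) [DecidableRel G.Adj] (A : V → V → T → T → ℝ)
    (p : V → T → ℝ) (i : V) : ℝ :=
  ∑ γ, p i γ * expUtil G A p i γ

/-- Membership in the product of simplices `Δ`. -/
def inSimplex (p : V → T → ℝ) : Prop :=
  ∀ i, (∀ γ, 0 ≤ p i γ) ∧ ∑ γ, p i γ = 1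

/-- `q` is a fixed point of the replicator dynamics: every strategy played with
positive probability has expected utility equal to the player's average utility. -/
def isFixedPt (G : SimpleGraph V) [DecidableRel G.Adj] (A : V → V → T → T → ℝ)
    (q : V → T → ℝ) : Prop :=
  ∀ i γ, 0 < q i γ → expUtil G A q i γ = avgUtil G A q i

/-- `p : ℝ → Δ` is a solution of the replicator dynamics
`dp_{iγ}/dt = p_{iγ}(u_{iγ}(p) - û_i(p))` on `[0,∞)`, staying in `Δ`. -/
def isReplicatorSol (G : SimpleGraph V) [DecidableRel G.Adj] (A : V → V → T → T → ℝ)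
    (p : ℝ → V → T → ℝ) : Prop :=
  (∀ t, 0 ≤ t → inSimplex (p t)) ∧
  ∀ t, 0 ≤ t → ∀ i γ,
    HasDerivAt (fun τ => p τ i γ)
      (p t i γ * (expUtil G A (p t) i γ - avgUtil G A (p t) i)) t


section Helpers

/-- finite min helper -/
lemma exists_pos_forall_le {ι : Type*} [Fintype ι] (f : ι → ℝ) (hf : ∀ i, 0 < f i) :
    ∃ m : ℝ, 0 < m ∧ ∀ i, m ≤ f i := by
  classical
  have hne : (insert (1:ℝ) (Finset.univ.image f)).Nonempty := ⟨1, by simp⟩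
  refine ⟨(insert (1:ℝ) (Finset.univ.image f)).min' hne, ?_, ?_⟩
  · have hmem := Finset.min'_mem (insert (1:ℝ) (Finset.univ.image f)) hne
    rcases Finset.mem_insert.1 hmem with h | h
    · rw [h]; norm_num
    · rcases Finset.mem_image.1 h with ⟨i, _, hi⟩
      rw [← hi]; exact hf i
  · intro i
    exact Finset.min'_le _ _ (Finset.mem_insert.2 (Or.inr (Finset.mem_image.2 ⟨i, Finset.mem_univ i, rfl⟩)))

/-- monotonicity from nonneg derivative on an interval -/
lemma le_of_hasDerivAt_nonneg {f f' : ℝ → ℝ} {a b : ℝ}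
    (hd : ∀ t ∈ Set.Icc a b, HasDerivAt f (f' t) t)
    (h0 : ∀ t ∈ Set.Icc a b, 0 ≤ f' t) (hab : a ≤ b) : f a ≤ f b := by
  have hmono : MonotoneOn f (Set.Icc a b) := by
    apply monotoneOn_of_deriv_nonneg (convex_Icc a b)
    · exact fun t ht => (hd t ht).continuousAt.continuousWithinAt
    · intro t ht
      rw [interior_Icc] at ht
      exact (hd t (Set.mem_Icc_of_Ioo ht)).differentiableAt.differentiableWithinAt
    · intro t ht
      rw [interior_Icc] at ht
      rw [(hd t (Set.mem_Icc_of_Ioo ht)).deriv]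
      exact h0 t (Set.mem_Icc_of_Ioo ht)
  exact hmono (Set.left_mem_Icc.2 hab) (Set.right_mem_Icc.2 hab) hab

lemma le_of_hasDerivAt_nonpos {f f' : ℝ → ℝ} {a b : ℝ}
    (hd : ∀ t ∈ Set.Icc a b, HasDerivAt f (f' t) t)
    (h0 : ∀ t ∈ Set.Icc a b, f' t ≤ 0) (hab : a ≤ b) : f b ≤ f a := by
  have h : -f a ≤ -f b := by
    have := le_of_hasDerivAt_nonneg (f := fun t => -f t) (f' := fun t => -f' t)
      (fun t ht => (hd t ht).neg) (fun t ht => neg_nonneg.2 (h0 t ht)) hab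
    simpa using this
  linarith

/-- Lipschitz-type bound from bounded derivative -/
lemma abs_sub_le_of_hasDerivAt {f f' : ℝ → ℝ} {a b M : ℝ}
    (hd : ∀ t ∈ Set.Icc a b, HasDerivAt f (f' t) t)
    (hM : ∀ t ∈ Set.Icc a b, |f' t| ≤ M) {t : ℝ} (ht : t ∈ Set.Icc a b) :
    |f t - f a| ≤ M * (t - a) := by
  have hsub : Set.Icc a t ⊆ Set.Icc a b := Set.Icc_subset_Icc le_rfl ht.2
  have h1 : M * a - f a ≤ M * t - f t := by
    refine le_of_hasDerivAt_nonneg (f := fun τ => M * τ - f τ) (f' := fun τ => M - f' τ)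
      (fun τ hτ => ?_) (fun τ hτ => ?_) ht.1
    · simpa using ((hasDerivAt_id τ).const_mul M).fun_sub (hd τ (hsub hτ))
    · show (0:ℝ) ≤ M - f' τ
      have := abs_le.1 (hM τ (hsub hτ)); linarith [this.2]
  have h2 : M * a + f a ≤ M * t + f t := by
    refine le_of_hasDerivAt_nonneg (f := fun τ => M * τ + f τ) (f' := fun τ => M + f' τ)
      (fun τ hτ => ?_) (fun τ hτ => ?_) ht.1
    · simpa using ((hasDerivAt_id τ).const_mul M).fun_add (hd τ (hsub hτ))
    · show (0:ℝ) ≤ M + f' τ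
      have := abs_le.1 (hM τ (hsub hτ)); linarith [this.1]
  rw [abs_le]; constructor <;> nlinarith

end Helpers
set_option linter.unusedSectionVars false

section Game

variable {V : Type} [Fintype V] [DecidableEq V] {T : Type} [Fintype T] [DecidableEq T]

/-- The sum of all absolute values of payoff entries, a crude uniform bound. -/
noncomputable def Abound (A : V → V → T → T → ℝ) : ℝ := ∑ i, ∑ γ, ∑ j, ∑ δ, |A i j γ δ|

/-- KL-divergence-like quantity. -/
noncomputable def Dfun (q x : V → T → ℝ) : ℝ := ∑ i, ∑ γ, q i γ * (Real.log (q i γ) - Real.log (x i γ))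

variable (G : SimpleGraph V) [DecidableRel G.Adj] (A : V → V → T → T → ℝ)

/-- relative payoff advantage -/
def gfun (x : V → T → ℝ) (i : V) (γ : T) : ℝ := expUtil G A x i γ - avgUtil G A x i

/-- total potential (twice the usual potential) -/
def Psi (x : V → T → ℝ) : ℝ := ∑ i, avgUtil G A x i

/-- dissipation term -/
def Wfun (x : V → T → ℝ) : ℝ := ∑ i, ∑ γ, x i γ * (gfun G A x i γ)^2

lemma pairing_eq (hsymm : ∀ i j γ δ, A i j γ δ = A j i δ γ) (x y : V → T → ℝ) :
    ∑ i, ∑ γ, x i γ * expUtil G A y i γ = ∑ i, ∑ γ, y i γ * expUtil G A x i γ := by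
  have key : ∀ u v : V → T → ℝ, ∑ i, ∑ γ, u i γ * expUtil G A v i γ
      = ∑ i, ∑ j, if G.Adj i j then ∑ γ, ∑ δ, u i γ * (A i j γ δ * v j δ) else 0 := by
    intro u v
    refine Finset.sum_congr rfl fun i _ => ?_
    unfold expUtil
    simp only [SimpleGraph.neighborFinset_eq_filter, Finset.sum_filter, Finset.mul_sum]
    rw [Finset.sum_comm]
    refine Finset.sum_congr rfl fun j _ => ?_
    by_cases h : G.Adj i j <;> simp [h, Finset.mul_sum]
  rw [key x y, key y x, Finset.sum_comm]
  refine Finset.sum_congr rfl fun b _ => Finset.sum_congr rfl fun a _ => ?_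
  by_cases h : G.Adj a b
  · rw [if_pos (G.adj_symm h), if_pos h]
    rw [Finset.sum_comm]
    refine Finset.sum_congr rfl fun γ _ => Finset.sum_congr rfl fun δ _ => ?_
    rw [hsymm b a γ δ]; ring
  · rw [if_neg (fun hc => h (G.adj_symm hc)), if_neg h]

lemma sum_vg_exp (x : V → T → ℝ) (hx1 : ∀ i, ∑ γ, x i γ = 1) :
    ∑ i, ∑ γ, (x i γ * gfun G A x i γ) * expUtil G A x i γ = Wfun G A x := by
  unfold Wfun
  refine Finset.sum_congr rfl fun i _ => ?_
  have h0 : ∑ γ, x i γ * gfun G A x i γ = 0 := by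
    unfold gfun
    have h : ∑ γ, x i γ * (expUtil G A x i γ - avgUtil G A x i)
        = (∑ γ, x i γ * expUtil G A x i γ) - (∑ γ, x i γ) * avgUtil G A x i := by
      rw [Finset.sum_mul, ← Finset.sum_sub_distrib]
      exact Finset.sum_congr rfl fun γ _ => by ring
    rw [h, hx1 i]
    unfold avgUtil; ring
  calc ∑ γ, (x i γ * gfun G A x i γ) * expUtil G A x i γ
      = ∑ γ, (x i γ * (gfun G A x i γ)^2 + (x i γ * gfun G A x i γ) * avgUtil G A x i) := by
        refine Finset.sum_congr rfl fun γ _ => ?_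
        have h : expUtil G A x i γ = gfun G A x i γ + avgUtil G A x i := by unfold gfun; ring
        rw [h]; ring
    _ = (∑ γ, x i γ * (gfun G A x i γ)^2) + (∑ γ, x i γ * gfun G A x i γ) * avgUtil G A x i := by
        rw [Finset.sum_add_distrib, Finset.sum_mul]
    _ = ∑ γ, x i γ * (gfun G A x i γ)^2 := by rw [h0]; ring

lemma continuous_expUtil (i : V) (γ : T) : Continuous fun x : V → T → ℝ => expUtil G A x i γ := by
  unfold expUtil
  exact continuous_finset_sum _ fun j _ => continuous_finset_sum _ fun δ _ =>
    continuous_const.mul ((continuous_apply δ).comp (continuous_apply j))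

lemma continuous_avgUtil (i : V) : Continuous fun x : V → T → ℝ => avgUtil G A x i := by
  unfold avgUtil
  exact continuous_finset_sum _ fun γ _ =>
    ((continuous_apply γ).comp (continuous_apply i)).fun_mul (continuous_expUtil G A i γ)

lemma continuous_gfun (i : V) (γ : T) : Continuous fun x : V → T → ℝ => gfun G A x i γ :=
  (continuous_expUtil G A i γ).sub (continuous_avgUtil G A i)

lemma continuous_Psi : Continuous fun x : V → T → ℝ => Psi G A x :=
  continuous_finset_sum _ fun i _ => continuous_avgUtil G A i

lemma Wfun_nonneg (x : V → T → ℝ) (hx : ∀ i γ, 0 ≤ x i γ) : 0 ≤ Wfun G A x :=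
  Finset.sum_nonneg fun i _ => Finset.sum_nonneg fun γ _ => mul_nonneg (hx i γ) (sq_nonneg _)

lemma term_le_Wfun (x : V → T → ℝ) (hx : ∀ i γ, 0 ≤ x i γ) (i : V) (γ : T) :
    x i γ * (gfun G A x i γ)^2 ≤ Wfun G A x := by
  have h1 : x i γ * (gfun G A x i γ)^2 ≤ ∑ γ', x i γ' * (gfun G A x i γ')^2 :=
    Finset.single_le_sum (fun γ' _ => mul_nonneg (hx i γ') (sq_nonneg _)) (Finset.mem_univ γ)
  refine h1.trans ?_
  exact Finset.single_le_sum
    (fun i' _ => Finset.sum_nonneg fun γ' _ => mul_nonneg (hx i' γ') (sq_nonneg _))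
    (Finset.mem_univ i)

lemma Abound_nonneg : 0 ≤ Abound A :=
  Finset.sum_nonneg fun _ _ => Finset.sum_nonneg fun _ _ =>
    Finset.sum_nonneg fun _ _ => Finset.sum_nonneg fun _ _ => abs_nonneg _

lemma expUtil_abs_le (x : V → T → ℝ) (hx : inSimplex x) (i : V) (γ : T) :
    |expUtil G A x i γ| ≤ Abound A := by
  have hx01 : ∀ j δ, |x j δ| ≤ 1 := by
    intro j δ
    rw [abs_of_nonneg ((hx j).1 δ)]
    calc x j δ ≤ ∑ δ', x j δ' := Finset.single_le_sum (fun δ' _ => (hx j).1 δ') (Finset.mem_univ δ)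
      _ = 1 := (hx j).2
  have h1 : |expUtil G A x i γ| ≤ ∑ j ∈ G.neighborFinset i, ∑ δ, |A i j γ δ| := by
    refine (Finset.abs_sum_le_sum_abs _ _).trans (Finset.sum_le_sum fun j _ => ?_)
    refine (Finset.abs_sum_le_sum_abs _ _).trans (Finset.sum_le_sum fun δ _ => ?_)
    rw [abs_mul]
    calc |A i j γ δ| * |x j δ| ≤ |A i j γ δ| * 1 :=
          mul_le_mul_of_nonneg_left (hx01 j δ) (abs_nonneg _)
      _ = |A i j γ δ| := mul_one _
  refine h1.trans ?_
  have h2 : ∑ j ∈ G.neighborFinset i, ∑ δ, |A i j γ δ| ≤ ∑ j, ∑ δ, |A i j γ δ| :=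
    Finset.sum_le_sum_of_subset_of_nonneg (Finset.subset_univ _)
      (fun j _ _ => Finset.sum_nonneg fun δ _ => abs_nonneg _)
  refine h2.trans ?_
  have h3 : ∑ j, ∑ δ, |A i j γ δ| ≤ ∑ γ', ∑ j, ∑ δ, |A i j γ' δ| :=
    Finset.single_le_sum (f := fun γ' => ∑ j, ∑ δ, |A i j γ' δ|)
      (fun γ' _ => Finset.sum_nonneg fun _ _ => Finset.sum_nonneg fun _ _ => abs_nonneg _)
      (Finset.mem_univ γ)
  refine h3.trans ?_
  exact Finset.single_le_sum (f := fun i' => ∑ γ', ∑ j, ∑ δ, |A i' j γ' δ|)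
    (fun i' _ => Finset.sum_nonneg fun _ _ => Finset.sum_nonneg fun _ _ =>
      Finset.sum_nonneg fun _ _ => abs_nonneg _)
    (Finset.mem_univ i)

lemma avgUtil_abs_le (x : V → T → ℝ) (hx : inSimplex x) (i : V) :
    |avgUtil G A x i| ≤ Abound A := by
  unfold avgUtil
  refine (Finset.abs_sum_le_sum_abs _ _).trans ?_
  have h : ∀ γ, |x i γ * expUtil G A x i γ| ≤ x i γ * Abound A := by
    intro γ
    rw [abs_mul, abs_of_nonneg ((hx i).1 γ)]
    exact mul_le_mul_of_nonneg_left (expUtil_abs_le G A x hx i γ) ((hx i).1 γ)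
  calc ∑ γ, |x i γ * expUtil G A x i γ| ≤ ∑ γ, x i γ * Abound A :=
        Finset.sum_le_sum fun γ _ => h γ
    _ = (∑ γ, x i γ) * Abound A := (Finset.sum_mul _ _ _).symm
    _ = Abound A := by rw [(hx i).2, one_mul]

lemma gfun_abs_le (x : V → T → ℝ) (hx : inSimplex x) (i : V) (γ : T) :
    |gfun G A x i γ| ≤ 2 * Abound A := by
  unfold gfun
  calc |expUtil G A x i γ - avgUtil G A x i| ≤ |expUtil G A x i γ| + |avgUtil G A x i| :=
        abs_sub _ _
    _ ≤ Abound A + Abound A :=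
        add_le_add (expUtil_abs_le G A x hx i γ) (avgUtil_abs_le G A x hx i)
    _ = 2 * Abound A := by ring

end Game
section Traj

variable {V : Type} [Fintype V] [DecidableEq V] {T : Type} [Fintype T] [DecidableEq T]
variable (G : SimpleGraph V) [DecidableRel G.Adj] (A : V → V → T → T → ℝ)
variable {p : ℝ → V → T → ℝ}

lemma simplex_coord_mem (x : V → T → ℝ) (hx : inSimplex x) (i : V) (γ : T) :
    0 ≤ x i γ ∧ x i γ ≤ 1 := by
  refine ⟨(hx i).1 γ, ?_⟩
  calc x i γ ≤ ∑ δ, x i δ := Finset.single_le_sum (fun δ _ => (hx i).1 δ) (Finset.mem_univ γ)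
    _ = 1 := (hx i).2

lemma hasDerivAt_Psi_comp (p : ℝ → V → T → ℝ) (v : V → T → ℝ) (t : ℝ)
    (hp : ∀ i γ, HasDerivAt (fun τ => p τ i γ) (v i γ) t) :
    HasDerivAt (fun τ => Psi G A (p τ))
      (∑ i, ∑ γ, (v i γ * expUtil G A (p t) i γ + p t i γ * expUtil G A v i γ)) t := by
  have H : HasDerivAt
      (fun τ => ∑ i, ∑ γ, p τ i γ * ∑ j ∈ G.neighborFinset i, ∑ δ, A i j γ δ * p τ j δ)
      (∑ i, ∑ γ, (v i γ * (∑ j ∈ G.neighborFinset i, ∑ δ, A i j γ δ * p t j δ)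
        + p t i γ * (∑ j ∈ G.neighborFinset i, ∑ δ, A i j γ δ * v j δ))) t := by
    refine HasDerivAt.fun_sum fun i _ => HasDerivAt.fun_sum fun γ _ => ?_
    exact (hp i γ).mul
      (HasDerivAt.fun_sum fun j _ => HasDerivAt.fun_sum fun δ _ => (hp j δ).const_mul (A i j γ δ))
  exact H

lemma hderiv_gfun (hsol : isReplicatorSol G A p) {t : ℝ} (ht : 0 ≤ t) (i : V) (γ : T) :
    HasDerivAt (fun τ => p τ i γ) (p t i γ * gfun G A (p t) i γ) t := hsol.2 t ht i γ

lemma hasDerivAt_Psi_traj (hsymm : ∀ i j γ δ, A i j γ δ = A j i δ γ)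
    (hsol : isReplicatorSol G A p) {t : ℝ} (ht : 0 ≤ t) :
    HasDerivAt (fun τ => Psi G A (p τ)) (2 * Wfun G A (p t)) t := by
  have H := hasDerivAt_Psi_comp G A p (fun i γ => p t i γ * gfun G A (p t) i γ) t
    (fun i γ => hderiv_gfun G A hsol ht i γ)
  have hval : (∑ i, ∑ γ, ((p t i γ * gfun G A (p t) i γ) * expUtil G A (p t) i γ
      + p t i γ * expUtil G A (fun i' γ' => p t i' γ' * gfun G A (p t) i' γ') i γ))
      = 2 * Wfun G A (p t) := by
    have hsplit : (∑ i, ∑ γ, ((p t i γ * gfun G A (p t) i γ) * expUtil G A (p t) i γ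
        + p t i γ * expUtil G A (fun i' γ' => p t i' γ' * gfun G A (p t) i' γ') i γ))
        = (∑ i, ∑ γ, (p t i γ * gfun G A (p t) i γ) * expUtil G A (p t) i γ)
          + (∑ i, ∑ γ, p t i γ *
              expUtil G A (fun i' γ' => p t i' γ' * gfun G A (p t) i' γ') i γ) := by
      rw [← Finset.sum_add_distrib]
      exact Finset.sum_congr rfl fun i _ => by rw [← Finset.sum_add_distrib]
    rw [hsplit]
    rw [pairing_eq G A hsymm (p t) (fun i' γ' => p t i' γ' * gfun G A (p t) i' γ')]
    rw [sum_vg_exp G A (p t) (fun i => (hsol.1 t ht i).2)]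
    ring
  exact hval ▸ H

lemma traj_pos (hsol : isReplicatorSol G A p) (hinit : ∀ i γ, 0 < p 0 i γ) :
    ∀ t, 0 ≤ t → ∀ i γ, 0 < p t i γ := by
  intro t ht i γ
  set C := 2 * Abound A with hC
  have hexp : ∀ τ : ℝ, (0:ℝ) < Real.exp (C * τ) := fun τ => Real.exp_pos _
  have hmono : p 0 i γ * Real.exp (C * 0) ≤ p t i γ * Real.exp (C * t) := by
    refine le_of_hasDerivAt_nonneg (f := fun τ => p τ i γ * Real.exp (C * τ))
      (f' := fun τ => (p τ i γ * gfun G A (p τ) i γ) * Real.exp (C * τ)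
        + p τ i γ * (Real.exp (C * τ) * C)) (fun τ hτ => ?_) (fun τ hτ => ?_) ht
    · exact (hsol.2 τ hτ.1 i γ).mul (by simpa using ((hasDerivAt_id τ).const_mul C).exp)
    · have h0 : 0 ≤ p τ i γ := (hsol.1 τ hτ.1 i).1 γ
      have hg := abs_le.1 (gfun_abs_le G A (p τ) (hsol.1 τ hτ.1) i γ)
      have hkey : 0 ≤ p τ i γ * (gfun G A (p τ) i γ + C) := mul_nonneg h0 (by rw [hC]; linarith [hg.1])
      show (0:ℝ) ≤ (p τ i γ * gfun G A (p τ) i γ) * Real.exp (C * τ) + p τ i γ * (Real.exp (C * τ) * C)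
      nlinarith [mul_nonneg hkey (hexp τ).le]
  have h0 : 0 < p 0 i γ * Real.exp (C * 0) := mul_pos (hinit i γ) (hexp 0)
  have hlt : 0 < p t i γ * Real.exp (C * t) := lt_of_lt_of_le h0 hmono
  by_contra hneg
  push_neg at hneg
  nlinarith [hexp t, mul_nonpos_of_nonpos_of_nonneg hneg (hexp t).le]

lemma Psi_mono (hsymm : ∀ i j γ δ, A i j γ δ = A j i δ γ) (hsol : isReplicatorSol G A p)
    {s t : ℝ} (hs : 0 ≤ s) (hst : s ≤ t) : Psi G A (p s) ≤ Psi G A (p t) := by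
  refine le_of_hasDerivAt_nonneg (f := fun τ => Psi G A (p τ))
    (f' := fun τ => 2 * Wfun G A (p τ))
    (fun τ hτ => hasDerivAt_Psi_traj G A hsymm hsol (hs.trans hτ.1)) (fun τ hτ => ?_) hst
  show (0:ℝ) ≤ 2 * Wfun G A (p τ)
  have := Wfun_nonneg G A (p τ) (fun i γ => (hsol.1 τ (hs.trans hτ.1) i).1 γ)
  linarith

lemma traj_displacement (hsol : isReplicatorSol G A p) {s b : ℝ} (hs : 0 ≤ s)
    {t : ℝ} (ht : t ∈ Set.Icc s b) (i : V) (γ : T) :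
    |p t i γ - p s i γ| ≤ (2 * Abound A) * (t - s) := by
  refine abs_sub_le_of_hasDerivAt (f' := fun τ => p τ i γ * gfun G A (p τ) i γ)
    (fun τ hτ => hsol.2 τ (hs.trans hτ.1) i γ) (fun τ hτ => ?_) ht
  have h1 := simplex_coord_mem (p τ) (hsol.1 τ (hs.trans hτ.1)) i γ
  have h2 := gfun_abs_le G A (p τ) (hsol.1 τ (hs.trans hτ.1)) i γ
  rw [abs_mul, abs_of_nonneg h1.1]
  calc p τ i γ * |gfun G A (p τ) i γ| ≤ 1 * (2 * Abound A) :=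
        mul_le_mul h1.2 h2 (abs_nonneg _) one_pos.le
    _ = 2 * Abound A := one_mul _

end Traj

section CompactNear

variable {V : Type} [Fintype V] [DecidableEq V] {T : Type} [Fintype T] [DecidableEq T]

lemma isCompact_simplex : IsCompact {x : V → T → ℝ | inSimplex x} := by
  have hsub : {x : V → T → ℝ | inSimplex x} ⊆
      Set.univ.pi (fun _ : V => Set.univ.pi fun _ : T => Set.Icc (0:ℝ) 1) := by
    intro x hx
    rw [Set.mem_univ_pi]
    intro i
    rw [Set.mem_univ_pi]
    intro γ
    exact Set.mem_Icc.2 (simplex_coord_mem x hx i γ)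
  refine IsCompact.of_isClosed_subset
    (isCompact_univ_pi fun _ => isCompact_univ_pi fun _ => isCompact_Icc) ?_ hsub
  have hset : {x : V → T → ℝ | inSimplex x} =
      ⋂ i, ((⋂ γ, {x : V → T → ℝ | 0 ≤ x i γ}) ∩ {x : V → T → ℝ | ∑ γ, x i γ = 1}) := by
    ext x
    simp only [Set.mem_setOf_eq, Set.mem_iInter, Set.mem_inter_iff, inSimplex]
  rw [hset]
  refine isClosed_iInter fun i => IsClosed.inter (isClosed_iInter fun γ => ?_) ?_
  · exact isClosed_le continuous_const ((continuous_apply γ).comp (continuous_apply i))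
  · exact isClosed_eq
      (continuous_finset_sum _ fun γ _ => (continuous_apply γ).comp (continuous_apply i))
      continuous_const

lemma near_of_dist {x y : V → T → ℝ} {r : ℝ} (h : dist x y ≤ r) (i : V) (γ : T) :
    |x i γ - y i γ| ≤ r := by
  have h1 := dist_le_pi_dist x y i
  have h2 := dist_le_pi_dist (x i) (y i) γ
  rw [Real.dist_eq] at h2
  linarith

lemma dist_of_near {x y : V → T → ℝ} {r : ℝ} (hr : 0 ≤ r)
    (h : ∀ i γ, |x i γ - y i γ| ≤ r) : dist x y ≤ r := by
  rw [dist_pi_le_iff hr]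
  intro i
  rw [dist_pi_le_iff hr]
  intro γ
  rw [Real.dist_eq]
  exact h i γ

end CompactNear
section FixedPoint

variable {V : Type} [Fintype V] [DecidableEq V] {T : Type} [Fintype T] [DecidableEq T]
variable (G : SimpleGraph V) [DecidableRel G.Adj] (A : V → V → T → T → ℝ)
variable {p : ℝ → V → T → ℝ}

lemma Psi_le_limit (hsymm : ∀ i j γ δ, A i j γ δ = A j i δ γ) (hsol : isReplicatorSol G A p)
    {q : V → T → ℝ} {tk : ℕ → ℝ} (htkTop : Tendsto tk atTop atTop)
    (htend : Tendsto (fun k => p (tk k)) atTop (𝓝 q)) :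
    ∀ t, 0 ≤ t → Psi G A (p t) ≤ Psi G A q := by
  intro t ht
  have h1 : Tendsto (fun k => Psi G A (p (tk k))) atTop (𝓝 (Psi G A q)) :=
    ((continuous_Psi G A).tendsto q).comp htend
  refine ge_of_tendsto h1 ?_
  filter_upwards [htkTop.eventually_ge_atTop t] with k hk
  exact Psi_mono G A hsymm hsol ht hk

lemma limit_isFixedPt (hsymm : ∀ i j γ δ, A i j γ δ = A j i δ γ) (hsol : isReplicatorSol G A p)
    {q : V → T → ℝ} {tk : ℕ → ℝ} (htk0 : ∀ k, 0 ≤ tk k) (htkTop : Tendsto tk atTop atTop)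
    (htend : Tendsto (fun k => p (tk k)) atTop (𝓝 q)) : isFixedPt G A q := by
  intro i γ hq
  by_contra hne
  have hc : gfun G A q i γ ≠ 0 := sub_ne_zero.2 hne
  have hPsile := Psi_le_limit G A hsymm hsol htkTop htend
  have hPsik : Tendsto (fun k => Psi G A (p (tk k))) atTop (𝓝 (Psi G A q)) :=
    ((continuous_Psi G A).tendsto q).comp htend
  set c := gfun G A q i γ with hcdef
  have hcabs : 0 < |c| := abs_pos.2 hc
  obtain ⟨δ', hδ'pos, hδ'⟩ := Metric.continuousAt_iff.1
    (continuous_gfun G A i γ).continuousAt (|c|/2) (by positivity)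
  set δ := min (δ'/2) (q i γ / 2) with hδdef
  have hδpos : 0 < δ := lt_min (by linarith) (by linarith)
  set M := 2 * Abound A + 1 with hM
  have hMpos : 0 < M := by have := Abound_nonneg (A := A); linarith
  set τ := δ / (2 * M) with hτdef
  have hτpos : 0 < τ := by positivity
  set w := (q i γ / 2) * (c / 2)^2 with hw
  have hc2 : (0:ℝ) < (c/2)^2 := by
    have hc2' : c/2 ≠ 0 := div_ne_zero hc two_ne_zero
    exact lt_of_le_of_ne (sq_nonneg _) (Ne.symm (pow_ne_zero 2 hc2'))
  have hwpos : 0 < w := by rw [hw]; exact mul_pos (by linarith) hc2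
  have hMτ : M * τ = δ / 2 := by
    rw [hτdef]; field_simp
  -- within a window of length τ after a δ/2-close visit, W stays ≥ w
  have hwindow : ∀ s, 0 ≤ s → (∀ i' γ', |p s i' γ' - q i' γ'| ≤ δ/2) →
      ∀ t ∈ Set.Icc s (s + τ), 2 * w ≤ 2 * Wfun G A (p t) := by
    intro s hs hnear t htI
    have ht0 : 0 ≤ t := hs.trans htI.1
    have hclose : ∀ i' γ', |p t i' γ' - q i' γ'| ≤ δ := by
      intro i' γ'
      have hdisp := traj_displacement G A hsol hs htI i' γ'
      have h2A : (2 * Abound A) * (t - s) ≤ δ / 2 := by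
        rw [← hMτ]
        have h1 : t - s ≤ τ := by linarith [htI.2]
        have h1' : 0 ≤ t - s := by linarith [htI.1]
        have h2 : (2 * Abound A) ≤ M := by rw [hM]; linarith
        nlinarith [Abound_nonneg (A := A)]
      calc |p t i' γ' - q i' γ'|
          ≤ |p t i' γ' - p s i' γ'| + |p s i' γ' - q i' γ'| := abs_sub_le _ _ _
        _ ≤ δ/2 + δ/2 := add_le_add (hdisp.trans h2A) (hnear i' γ')
        _ = δ := by ring
    have hdist : dist (p t) q ≤ δ := dist_of_near hδpos.le hclose
    have hgs : |gfun G A (p t) i γ - c| < |c|/2 := by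
      have hlt : dist (p t) q < δ' := by
        have : δ ≤ δ'/2 := min_le_left _ _
        linarith
      have := hδ' hlt
      rwa [Real.dist_eq] at this
    have hp2 : q i γ / 2 ≤ p t i γ := by
      have habs := abs_le.1 (hclose i γ)
      have hδ2 : δ ≤ q i γ/2 := min_le_right _ _
      linarith [habs.1]
    have hWt : w ≤ Wfun G A (p t) := by
      have hgabs : |c|/2 ≤ |gfun G A (p t) i γ| := by
        have h2 := abs_sub_abs_le_abs_sub c (gfun G A (p t) i γ)
        rw [abs_sub_comm] at h2
        linarith
      have hg2 : (c/2)^2 ≤ (gfun G A (p t) i γ)^2 := by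
        have h3 : (|c|/2)^2 ≤ |gfun G A (p t) i γ|^2 :=
          pow_le_pow_left₀ (by positivity) hgabs 2
        calc (c/2)^2 = (|c|/2)^2 := by rw [div_pow, div_pow, sq_abs]
          _ ≤ |gfun G A (p t) i γ|^2 := h3
          _ = (gfun G A (p t) i γ)^2 := sq_abs _
      have hterm : w ≤ p t i γ * (gfun G A (p t) i γ)^2 := by
        rw [hw]
        exact mul_le_mul hp2 hg2 hc2.le ((hsol.1 t ht0 i).1 γ)
      exact hterm.trans (term_le_Wfun G A (p t) (fun i' γ' => (hsol.1 t ht0 i').1 γ') i γ)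
    linarith
  -- choose a late close visit with nearly-maximal potential
  have hev1 : ∀ᶠ k in atTop, ∀ i' γ', |p (tk k) i' γ' - q i' γ'| ≤ δ/2 := by
    have hmem := htend.eventually (Metric.closedBall_mem_nhds q (show (0:ℝ) < δ/2 by linarith))
    filter_upwards [hmem] with k hk i' γ'
    exact near_of_dist (by simpa [Metric.mem_closedBall] using hk) i' γ'
  have hev2 : ∀ᶠ k in atTop, Psi G A q - Psi G A (p (tk k)) < 2*w*τ := by
    have hh : ∀ᶠ k in atTop, Psi G A (p (tk k)) ∈ Set.Ioi (Psi G A q - 2*w*τ) :=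
      hPsik.eventually (Ioi_mem_nhds (by nlinarith))
    filter_upwards [hh] with k hk
    have := Set.mem_Ioi.1 hk
    linarith
  obtain ⟨k, hk1, hk2⟩ := (hev1.and hev2).exists
  have hs0 : 0 ≤ tk k := htk0 k
  have hgain : Psi G A (p (tk k)) - 2*w*(tk k) ≤ Psi G A (p (tk k + τ)) - 2*w*(tk k + τ) := by
    refine le_of_hasDerivAt_nonneg (f := fun t => Psi G A (p t) - 2*w*t)
      (f' := fun t => 2 * Wfun G A (p t) - 2*w) (fun t htI => ?_) (fun t htI => ?_)
      (by linarith : tk k ≤ tk k + τ)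
    · exact (hasDerivAt_Psi_traj G A hsymm hsol (hs0.trans htI.1)).sub
        (by simpa using (hasDerivAt_id t).const_mul (2*w))
    · show (0:ℝ) ≤ 2 * Wfun G A (p t) - 2*w
      have := hwindow (tk k) hs0 hk1 t htI
      linarith
  have hfin : Psi G A (p (tk k + τ)) ≤ Psi G A q := hPsile (tk k + τ) (by linarith)
  linarith

end FixedPoint
section Dlemmas

variable {V : Type} [Fintype V] [DecidableEq V] {T : Type} [Fintype T] [DecidableEq T]

lemma log_ineq {a b : ℝ} (ha : 0 < a) (hb : 0 < b) :
    a - b ≤ a * (Real.log a - Real.log b) := by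
  have h := Real.log_le_sub_one_of_pos (x := b / a) (by positivity)
  rw [Real.log_div hb.ne' ha.ne'] at h
  have h2 := mul_le_mul_of_nonneg_left h ha.le
  have h3 : a * (b/a - 1) = b - a := by field_simp
  nlinarith

noncomputable def flog (a y : ℝ) : ℝ := a * Real.log a - a * Real.log y - a + y

lemma flog_nonneg {a y : ℝ} (ha : 0 < a) (hy : 0 < y) : 0 ≤ flog a y := by
  have h := log_ineq ha hy
  have hr : flog a y = a * (Real.log a - Real.log y) - a + y := by unfold flog; ring
  linarith

lemma flog_pos {a y : ℝ} (ha : 0 < a) (hy : 0 < y) (hne : y ≠ a) : 0 < flog a y := by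
  have h := Real.log_lt_sub_one_of_pos (x := y / a) (by positivity)
    (fun hcon => hne ((div_eq_one_iff_eq ha.ne').1 hcon))
  rw [Real.log_div hy.ne' ha.ne'] at h
  have h2 := mul_lt_mul_of_pos_left h ha
  have h3 : a * (y/a - 1) = y - a := by field_simp
  have hr : flog a y = -(a * (Real.log y - Real.log a)) - a + y := by unfold flog; ring
  nlinarith

lemma flog_hasDerivAt {a y : ℝ} (hy : y ≠ 0) : HasDerivAt (flog a) (1 - a / y) y := by
  have hval : 1 - a / y = -(a * y⁻¹) + 1 := by rw [div_eq_mul_inv]; ring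
  rw [hval]
  exact ((((Real.hasDerivAt_log hy).const_mul a).const_sub (a * Real.log a)).sub_const a).add
    (hasDerivAt_id y)

lemma flog_mono {a : ℝ} (ha : 0 < a) {y₁ y₂ : ℝ} (h1 : a ≤ y₁) (h12 : y₁ ≤ y₂) :
    flog a y₁ ≤ flog a y₂ := by
  refine le_of_hasDerivAt_nonneg (f := flog a) (f' := fun y => 1 - a / y)
    (fun y hy => flog_hasDerivAt (by intro h; rw [h] at hy; exact absurd hy.1 (by linarith)))
    (fun y hy => ?_) h12
  have hy0 : 0 < y := lt_of_lt_of_le ha (h1.trans hy.1)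
  have hay : a ≤ y := h1.trans hy.1
  have : a / y ≤ 1 := div_le_one_of_le₀ hay hy0.le
  show (0:ℝ) ≤ 1 - a / y
  linarith

lemma flog_anti {a : ℝ} (ha : 0 < a) {y₁ y₂ : ℝ} (h0 : 0 < y₁) (h12 : y₁ ≤ y₂) (h2 : y₂ ≤ a) :
    flog a y₂ ≤ flog a y₁ := by
  refine le_of_hasDerivAt_nonpos (f := flog a) (f' := fun y => 1 - a / y)
    (fun y hy => flog_hasDerivAt (by intro h; rw [h] at hy; exact absurd hy.1 (by linarith)))
    (fun y hy => ?_) h12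
  have hy0 : 0 < y := lt_of_lt_of_le h0 hy.1
  have hya : y ≤ a := hy.2.trans h2
  have : 1 ≤ a / y := (one_le_div hy0).2 hya
  show (1:ℝ) - a / y ≤ 0
  linarith

variable (G : SimpleGraph V) [DecidableRel G.Adj] (A : V → V → T → T → ℝ) {p : ℝ → V → T → ℝ}

lemma hasDerivAt_Dfun (hsol : isReplicatorSol G A p)
    (hpos : ∀ t, 0 ≤ t → ∀ i γ, 0 < p t i γ) (q : V → T → ℝ) {t : ℝ} (ht : 0 ≤ t) :
    HasDerivAt (fun τ => Dfun q (p τ)) (-(∑ i, ∑ γ, q i γ * gfun G A (p t) i γ)) t := by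
  have H : HasDerivAt (fun τ => ∑ i, ∑ γ, q i γ * (Real.log (q i γ) - Real.log (p τ i γ)))
      (∑ i, ∑ γ, q i γ * -((p t i γ * gfun G A (p t) i γ) / p t i γ)) t := by
    refine HasDerivAt.fun_sum fun i _ => HasDerivAt.fun_sum fun γ _ => ?_
    exact (((hsol.2 t ht i γ).log (hpos t ht i γ).ne').const_sub (Real.log (q i γ))).const_mul
      (q i γ)
  have hval : ∑ i, ∑ γ, q i γ * -((p t i γ * gfun G A (p t) i γ) / p t i γ)
      = -(∑ i, ∑ γ, q i γ * gfun G A (p t) i γ) := by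
    rw [← Finset.sum_neg_distrib]
    refine Finset.sum_congr rfl fun i _ => ?_
    rw [← Finset.sum_neg_distrib]
    refine Finset.sum_congr rfl fun γ _ => ?_
    rw [mul_div_cancel_left₀ _ (hpos t ht i γ).ne']
    ring
  exact hval ▸ H

lemma sum_qg_identity (hsymm : ∀ i j γ δ, A i j γ δ = A j i δ γ) {q : V → T → ℝ}
    (hqΔ : inSimplex q) (hqfix : isFixedPt G A q) {x : V → T → ℝ} (hxΔ : inSimplex x) :
    ∑ i, ∑ γ, q i γ * gfun G A x i γ
      = (∑ i, ∑ γ, (if q i γ = 0 then x i γ * gfun G A q i γ else 0))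
        + (Psi G A q - Psi G A x) := by
  have hgen : ∀ z y : V → T → ℝ, (∀ i, ∑ γ, z i γ = 1) →
      ∑ i, ∑ γ, z i γ * gfun G A y i γ
        = (∑ i, ∑ γ, z i γ * expUtil G A y i γ) - Psi G A y := by
    intro z y hz1
    unfold Psi
    rw [← Finset.sum_sub_distrib]
    refine Finset.sum_congr rfl fun i _ => ?_
    have h : ∑ γ, z i γ * gfun G A y i γ
        = (∑ γ, z i γ * expUtil G A y i γ) - (∑ γ, z i γ) * avgUtil G A y i := by
      unfold gfun
      rw [Finset.sum_mul, ← Finset.sum_sub_distrib]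
      exact Finset.sum_congr rfl fun γ _ => by ring
    rw [h, hz1 i, one_mul]
  have h1 := hgen q x (fun i => (hqΔ i).2)
  have h2 := hgen x q (fun i => (hxΔ i).2)
  have h3 : ∑ i, ∑ γ, x i γ * gfun G A q i γ
      = ∑ i, ∑ γ, (if q i γ = 0 then x i γ * gfun G A q i γ else 0) := by
    refine Finset.sum_congr rfl fun i _ => Finset.sum_congr rfl fun γ _ => ?_
    by_cases h : q i γ = 0
    · rw [if_pos h]
    · rw [if_neg h]
      have hpos : 0 < q i γ := lt_of_le_of_ne ((hqΔ i).1 γ) (Ne.symm h)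
      have hfix := hqfix i γ hpos
      unfold gfun
      rw [hfix, sub_self, mul_zero]
  have hpair := pairing_eq G A hsymm q x
  linarith

lemma dd_le_KW (hsymm : ∀ i j γ δ, A i j γ δ = A j i δ γ) {q : V → T → ℝ}
    (hqΔ : inSimplex q) (hqfix : isFixedPt G A q) {x : V → T → ℝ} (hxΔ : inSimplex x)
    (hball : ∀ i γ, q i γ = 0 → gfun G A q i γ ≠ 0 →
      |gfun G A x i γ - gfun G A q i γ| ≤ |gfun G A q i γ|/2)
    (hPsi : Psi G A x ≤ Psi G A q) :
    -(∑ i, ∑ γ, q i γ * gfun G A x i γ)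
      ≤ (∑ i, ∑ γ, (if q i γ = 0 ∧ gfun G A q i γ ≠ 0 then 4 / |gfun G A q i γ| else 0))
          * Wfun G A x := by
  rw [sum_qg_identity G A hsymm hqΔ hqfix hxΔ]
  have hW0 : 0 ≤ Wfun G A x := Wfun_nonneg G A x (fun i γ => (hxΔ i).1 γ)
  have hmain : -(∑ i, ∑ γ, (if q i γ = 0 then x i γ * gfun G A q i γ else 0))
      ≤ (∑ i, ∑ γ, (if q i γ = 0 ∧ gfun G A q i γ ≠ 0 then 4 / |gfun G A q i γ| else 0))
          * Wfun G A x := by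
    rw [Finset.sum_mul, ← Finset.sum_neg_distrib]
    refine Finset.sum_le_sum fun i _ => ?_
    rw [Finset.sum_mul, ← Finset.sum_neg_distrib]
    refine Finset.sum_le_sum fun γ _ => ?_
    by_cases h0 : q i γ = 0
    · by_cases hg : gfun G A q i γ = 0
      · rw [if_pos h0, if_neg (by simp [hg]), hg, mul_zero, neg_zero, zero_mul]
      · rw [if_pos h0, if_pos ⟨h0, hg⟩]
        have hx0 : 0 ≤ x i γ := (hxΔ i).1 γ
        have hgq : 0 < |gfun G A q i γ| := abs_pos.2 hg
        have hgx : |gfun G A q i γ|/2 ≤ |gfun G A x i γ| := by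
          have h2 := abs_sub_abs_le_abs_sub (gfun G A q i γ) (gfun G A x i γ)
          rw [abs_sub_comm] at h2
          linarith [hball i γ h0 hg]
        have step1 : -(x i γ * gfun G A q i γ) ≤ x i γ * |gfun G A q i γ| := by
          have hna := neg_abs_le (gfun G A q i γ)
          nlinarith
        have step2 : x i γ * |gfun G A q i γ|
            ≤ (4 / |gfun G A q i γ|) * (x i γ * (gfun G A x i γ)^2) := by
          rw [div_mul_eq_mul_div, le_div_iff₀ hgq]
          have h4 : |gfun G A q i γ|^2 ≤ 4 * (gfun G A x i γ)^2 := by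
            have h5 : (|gfun G A q i γ|/2)^2 ≤ |gfun G A x i γ|^2 :=
              pow_le_pow_left₀ (by positivity) hgx 2
            rw [sq_abs] at h5
            nlinarith [sq_abs (gfun G A q i γ)]
          nlinarith
        have step3 : (4 / |gfun G A q i γ|) * (x i γ * (gfun G A x i γ)^2)
            ≤ (4 / |gfun G A q i γ|) * Wfun G A x :=
          mul_le_mul_of_nonneg_left
            (term_le_Wfun G A x (fun i' γ' => (hxΔ i').1 γ') i γ) (by positivity)
        linarith
    · rw [if_neg h0, if_neg (by simp [h0]), neg_zero, zero_mul]
  linarith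

lemma Dfun_term_ge (q x : V → T → ℝ) (hq0 : ∀ i γ, 0 ≤ q i γ)
    (hxpos : ∀ i γ, 0 < x i γ) (i : V) (γ : T) :
    q i γ - (if 0 < q i γ then x i γ else 0)
      ≤ q i γ * (Real.log (q i γ) - Real.log (x i γ)) := by
  by_cases h : 0 < q i γ
  · rw [if_pos h]; exact log_ineq h (hxpos i γ)
  · have h0 : q i γ = 0 := le_antisymm (not_lt.1 h) (hq0 i γ)
    rw [if_neg h, h0]; simp

lemma Dfun_player_ge (q x : V → T → ℝ) (hq : inSimplex q) (hxpos : ∀ i γ, 0 < x i γ) (i : V) :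
    1 - (∑ γ ∈ Finset.univ.filter (fun γ => 0 < q i γ), x i γ)
      ≤ ∑ γ, q i γ * (Real.log (q i γ) - Real.log (x i γ)) := by
  have h := Finset.sum_le_sum
    (fun γ (_ : γ ∈ Finset.univ) => Dfun_term_ge q x (fun i' γ' => (hq i').1 γ') hxpos i γ)
  have hL : ∑ γ, (q i γ - (if 0 < q i γ then x i γ else 0))
      = 1 - ∑ γ ∈ Finset.univ.filter (fun γ => 0 < q i γ), x i γ := by
    rw [Finset.sum_sub_distrib, (hq i).2, Finset.sum_filter]
  linarith

lemma filter_sum_le_one (q x : V → T → ℝ) (hxΔ : inSimplex x) (i : V) :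
    ∑ γ ∈ Finset.univ.filter (fun γ => 0 < q i γ), x i γ ≤ 1 := by
  calc ∑ γ ∈ Finset.univ.filter (fun γ => 0 < q i γ), x i γ ≤ ∑ γ, x i γ :=
        Finset.sum_le_sum_of_subset_of_nonneg (Finset.filter_subset _ _)
          (fun γ _ _ => (hxΔ i).1 γ)
    _ = 1 := (hxΔ i).2

lemma Dfun_player_nonneg (q x : V → T → ℝ) (hq : inSimplex q) (hxΔ : inSimplex x)
    (hxpos : ∀ i γ, 0 < x i γ) (i : V) :
    0 ≤ ∑ γ, q i γ * (Real.log (q i γ) - Real.log (x i γ)) := by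
  have h1 := Dfun_player_ge q x hq hxpos i
  have h2 := filter_sum_le_one q x hxΔ i
  linarith

lemma Dfun_nonneg (q x : V → T → ℝ) (hq : inSimplex q) (hxΔ : inSimplex x)
    (hxpos : ∀ i γ, 0 < x i γ) : 0 ≤ Dfun q x :=
  Finset.sum_nonneg fun i _ => Dfun_player_nonneg q x hq hxΔ hxpos i

lemma player_le_Dfun (q x : V → T → ℝ) (hq : inSimplex q) (hxΔ : inSimplex x)
    (hxpos : ∀ i γ, 0 < x i γ) (i : V) :
    ∑ γ, q i γ * (Real.log (q i γ) - Real.log (x i γ)) ≤ Dfun q x :=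
  Finset.single_le_sum (fun i' _ => Dfun_player_nonneg q x hq hxΔ hxpos i') (Finset.mem_univ i)

lemma off_le_Dfun (q x : V → T → ℝ) (hq : inSimplex q) (hxΔ : inSimplex x)
    (hxpos : ∀ i γ, 0 < x i γ) (i : V) (γ : T) (h0 : q i γ = 0) :
    x i γ ≤ Dfun q x := by
  have hnotmem : γ ∉ Finset.univ.filter (fun γ' => 0 < q i γ') := by simp [h0]
  have h1 : x i γ + ∑ γ' ∈ Finset.univ.filter (fun γ' => 0 < q i γ'), x i γ' ≤ 1 := by
    calc x i γ + ∑ γ' ∈ Finset.univ.filter (fun γ' => 0 < q i γ'), x i γ'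
        = ∑ γ' ∈ insert γ (Finset.univ.filter (fun γ' => 0 < q i γ')), x i γ' :=
          (Finset.sum_insert hnotmem).symm
      _ ≤ ∑ γ', x i γ' := Finset.sum_le_sum_of_subset_of_nonneg (Finset.subset_univ _)
          (fun γ' _ _ => (hxΔ i).1 γ')
      _ = 1 := (hxΔ i).2
  have h2 := Dfun_player_ge q x hq hxpos i
  have h3 := player_le_Dfun q x hq hxΔ hxpos i
  linarith

lemma flog_le_Dfun (q x : V → T → ℝ) (hq : inSimplex q) (hxΔ : inSimplex x)
    (hxpos : ∀ i γ, 0 < x i γ) (i : V) (γ : T) (h0 : 0 < q i γ) :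
    flog (q i γ) (x i γ) ≤ Dfun q x := by
  have hpt : ∀ γ', (q i γ' - (if 0 < q i γ' then x i γ' else 0))
      + (if γ' = γ then flog (q i γ) (x i γ) else 0)
      ≤ q i γ' * (Real.log (q i γ') - Real.log (x i γ')) := by
    intro γ'
    by_cases he : γ' = γ
    · subst he
      rw [if_pos rfl, if_pos h0]
      refine le_of_eq ?_
      unfold flog; ring
    · rw [if_neg he, add_zero]
      exact Dfun_term_ge q x (fun i' γ'' => (hq i').1 γ'') hxpos i γ'
  have hsum := Finset.sum_le_sum (fun γ' (_ : γ' ∈ Finset.univ) => hpt γ')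
  have hA : ∑ γ', ((q i γ' - (if 0 < q i γ' then x i γ' else 0))
      + (if γ' = γ then flog (q i γ) (x i γ) else 0))
      = (1 - ∑ γ' ∈ Finset.univ.filter (fun γ' => 0 < q i γ'), x i γ')
        + flog (q i γ) (x i γ) := by
    rw [Finset.sum_add_distrib, Finset.sum_sub_distrib, (hq i).2, Finset.sum_filter]
    congr 1
    simp
  have h2 := filter_sum_le_one q x hxΔ i
  have h3 := player_le_Dfun q x hq hxΔ hxpos i
  rw [hA] at hsum
  linarith

lemma modulus_coord (q : V → T → ℝ) (hq : inSimplex q) (i : V) (γ : T) {ρ : ℝ} (hρ : 0 < ρ) :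
    ∃ m : ℝ, 0 < m ∧ ∀ x : V → T → ℝ, inSimplex x → (∀ i' γ', 0 < x i' γ') →
      Dfun q x < m → |x i γ - q i γ| < ρ := by
  rcases eq_or_lt_of_le ((hq i).1 γ) with h0 | hpos
  · refine ⟨ρ, hρ, fun x hxΔ hxpos hD => ?_⟩
    have hoff := off_le_Dfun q x hq hxΔ hxpos i γ h0.symm
    rw [← h0, sub_zero, abs_of_pos (hxpos i γ)]
    linarith
  · by_cases hρq : ρ < q i γ
    · refine ⟨min (flog (q i γ) (q i γ - ρ)) (flog (q i γ) (q i γ + ρ)), ?_, ?_⟩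
      · exact lt_min (flog_pos hpos (by linarith) (by intro h; linarith))
          (flog_pos hpos (by linarith) (by intro h; linarith))
      · intro x hxΔ hxpos hD
        have hf := flog_le_Dfun q x hq hxΔ hxpos i γ hpos
        by_contra habs
        push_neg at habs
        rcases le_abs.1 habs with h | h
        · have hm := flog_mono hpos (by linarith : q i γ ≤ q i γ + ρ)
            (by linarith : q i γ + ρ ≤ x i γ)
          have hmin := min_le_right (flog (q i γ) (q i γ - ρ)) (flog (q i γ) (q i γ + ρ))
          linarith
        · have ha := flog_anti hpos (hxpos i γ) (by linarith : x i γ ≤ q i γ - ρ)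
            (by linarith : q i γ - ρ ≤ q i γ)
          have hmin := min_le_left (flog (q i γ) (q i γ - ρ)) (flog (q i γ) (q i γ + ρ))
          linarith
    · refine ⟨flog (q i γ) (q i γ + ρ),
        flog_pos hpos (by linarith) (by intro h; linarith), ?_⟩
      intro x hxΔ hxpos hD
      have hf := flog_le_Dfun q x hq hxΔ hxpos i γ hpos
      by_contra habs
      push_neg at habs
      rcases le_abs.1 habs with h | h
      · have hm := flog_mono hpos (by linarith : q i γ ≤ q i γ + ρ)
          (by linarith : q i γ + ρ ≤ x i γ)
        linarith
      · have := hxpos i γ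
        linarith [not_lt.1 hρq]

lemma tendsto_Dfun_zero {q : V → T → ℝ} (hq0 : ∀ i γ, 0 ≤ q i γ) {f : ℕ → V → T → ℝ}
    (hf : Tendsto f atTop (𝓝 q)) :
    Tendsto (fun k => Dfun q (f k)) atTop (𝓝 0) := by
  have H : Tendsto (fun k => ∑ i, ∑ γ, q i γ * (Real.log (q i γ) - Real.log (f k i γ)))
      atTop (𝓝 (∑ _i : V, ∑ _γ : T, (0:ℝ))) := by
    refine tendsto_finset_sum _ fun i _ => tendsto_finset_sum _ fun γ _ => ?_
    rcases eq_or_lt_of_le (hq0 i γ) with h | h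
    · have hz : (fun k => q i γ * (Real.log (q i γ) - Real.log (f k i γ))) = fun _ => (0:ℝ) := by
        funext k; rw [← h, zero_mul]
      rw [hz]; exact tendsto_const_nhds
    · have hcoord : Tendsto (fun k => f k i γ) atTop (𝓝 (q i γ)) :=
        tendsto_pi_nhds.1 (tendsto_pi_nhds.1 hf i) γ
      have hlog : Tendsto (fun k => Real.log (f k i γ)) atTop (𝓝 (Real.log (q i γ))) :=
        ((Real.continuousAt_log h.ne').tendsto).comp hcoord
      have hh := ((tendsto_const_nhds :
        Tendsto (fun _ : ℕ => Real.log (q i γ)) atTop (𝓝 (Real.log (q i γ)))).sub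
          hlog).const_mul (q i γ)
      simpa using hh
  simpa [Dfun] using H

end Dlemmas
/-- **Point-wise convergence of replicator dynamics in network coordination
games.** Every solution of the replicator dynamics of a network (polymatrix)
coordination game whose initial condition lies in the interior of `Δ` converges,
as `t → ∞`, to a single fixed point `q ∈ Δ` of the replicator dynamics. -/
theorem replicator_pointwise_convergence_network_coordination
    (G : SimpleGraph V) [DecidableRel G.Adj]
    (A : V → V → T → T → ℝ)
    (hsymm : ∀ i j γ δ, A i j γ δ = A j i δ γ)
    (p : ℝ → V → T → ℝ)
    (hsol : isReplicatorSol G A p)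
    (hinit : ∀ i γ, 0 < p 0 i γ) :
    ∃ q : V → T → ℝ, inSimplex q ∧ isFixedPt G A q ∧
      Tendsto p atTop (𝓝 q) := by
  classical
  have hpos : ∀ t, 0 ≤ t → ∀ i γ, 0 < p t i γ := traj_pos G A hsol hinit
  obtain ⟨q, hqmem, φ, hφ, htend⟩ := (isCompact_simplex (V := V) (T := T)).tendsto_subseq
    (x := fun n : ℕ => p n) (fun n => hsol.1 n (Nat.cast_nonneg n))
  have hqΔ : inSimplex q := hqmem
  set tk : ℕ → ℝ := fun k => ((φ k : ℕ) : ℝ) with htkdef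
  have htk0 : ∀ k, 0 ≤ tk k := fun k => Nat.cast_nonneg _
  have htkTop : Tendsto tk atTop atTop := tendsto_natCast_atTop_atTop.comp hφ.tendsto_atTop
  have htendk : Tendsto (fun k => p (tk k)) atTop (𝓝 q) := htend
  have hqfix : isFixedPt G A q := limit_isFixedPt G A hsymm hsol htk0 htkTop htendk
  refine ⟨q, hqΔ, hqfix, ?_⟩
  have hPsile : ∀ t, 0 ≤ t → Psi G A (p t) ≤ Psi G A q :=
    Psi_le_limit G A hsymm hsol htkTop htendk
  set K : ℝ := ∑ i, ∑ γ, (if q i γ = 0 ∧ gfun G A q i γ ≠ 0 then 4 / |gfun G A q i γ| else 0)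
    with hKdef
  have hK0 : 0 ≤ K := Finset.sum_nonneg fun i _ => Finset.sum_nonneg fun γ _ => by
    by_cases h : q i γ = 0 ∧ gfun G A q i γ ≠ 0
    · rw [if_pos h]; positivity
    · rw [if_neg h]
  -- δ from continuity for the finitely many "bad" coordinates
  obtain ⟨δ, hδpos, hδprop⟩ : ∃ δ : ℝ, 0 < δ ∧ ∀ x : V → T → ℝ, dist x q ≤ δ →
      ∀ i γ, q i γ = 0 → gfun G A q i γ ≠ 0 →
        |gfun G A x i γ - gfun G A q i γ| ≤ |gfun G A q i γ|/2 := by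
    have hper : ∀ z : V × T, ∃ d : ℝ, 0 < d ∧ ∀ x : V → T → ℝ, dist x q ≤ d →
        q z.1 z.2 = 0 → gfun G A q z.1 z.2 ≠ 0 →
          |gfun G A x z.1 z.2 - gfun G A q z.1 z.2| ≤ |gfun G A q z.1 z.2|/2 := by
      intro z
      by_cases hbad : q z.1 z.2 = 0 ∧ gfun G A q z.1 z.2 ≠ 0
      · obtain ⟨d, hd, hcont⟩ := Metric.continuousAt_iff.1
          (continuous_gfun G A z.1 z.2).continuousAt (|gfun G A q z.1 z.2|/2)
          (by have := abs_pos.2 hbad.2; linarith)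
        refine ⟨d/2, by linarith, fun x hx _ _ => ?_⟩
        have hcd := hcont (show dist x q < d by linarith)
        rw [Real.dist_eq] at hcd
        linarith
      · exact ⟨1, one_pos, fun x _ h1 h2 => absurd ⟨h1, h2⟩ hbad⟩
    choose df hdf using hper
    obtain ⟨δ, hδpos, hδle⟩ := exists_pos_forall_le df (fun z => (hdf z).1)
    exact ⟨δ, hδpos, fun x hx i γ h1 h2 => (hdf (i, γ)).2 x (hx.trans (hδle (i, γ))) h1 h2⟩
  -- global modulus
  have hmodex : ∀ ρ : ℝ, 0 < ρ → ∃ m : ℝ, 0 < m ∧ ∀ t : ℝ, 0 ≤ t →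
      Dfun q (p t) < m → ∀ i γ, |p t i γ - q i γ| < ρ := by
    intro ρ hρ
    have hper : ∀ z : V × T, ∃ m : ℝ, 0 < m ∧ ∀ x : V → T → ℝ, inSimplex x →
        (∀ i' γ', 0 < x i' γ') → Dfun q x < m → |x z.1 z.2 - q z.1 z.2| < ρ := fun z =>
      modulus_coord q hqΔ z.1 z.2 hρ
    choose mf hmf using hper
    obtain ⟨m, hm, hmle⟩ := exists_pos_forall_le mf (fun z => (hmf z).1)
    refine ⟨m, hm, fun t ht hD i γ => ?_⟩
    exact (hmf (i, γ)).2 (p t) (hsol.1 t ht) (hpos t ht) (lt_of_lt_of_le hD (hmle (i, γ)))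
  obtain ⟨m, hmpos, hmod⟩ := hmodex (δ/2) (by linarith)
  -- the Lyapunov function E := D - K·Ψ is nonincreasing while within the δ-ball
  have hEmono : ∀ a b : ℝ, 0 ≤ a → a ≤ b →
      (∀ t ∈ Set.Icc a b, ∀ i γ, |p t i γ - q i γ| ≤ δ) →
      Dfun q (p b) - K * Psi G A (p b) ≤ Dfun q (p a) - K * Psi G A (p a) := by
    intro a b ha hab hball
    refine le_of_hasDerivAt_nonpos
      (f := fun t => Dfun q (p t) - K * Psi G A (p t))
      (f' := fun t => -(∑ i, ∑ γ, q i γ * gfun G A (p t) i γ) - K * (2 * Wfun G A (p t)))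
      (fun t ht => ?_) (fun t ht => ?_) hab
    · exact (hasDerivAt_Dfun G A hsol hpos q (ha.trans ht.1)).sub
        ((hasDerivAt_Psi_traj G A hsymm hsol (ha.trans ht.1)).const_mul K)
    · have ht0 : 0 ≤ t := ha.trans ht.1
      have hdd := dd_le_KW G A hsymm hqΔ hqfix (hsol.1 t ht0)
        (fun i γ h1 h2 => hδprop (p t) (dist_of_near hδpos.le (hball t ht)) i γ h1 h2)
        (hPsile t ht0)
      have hW := Wfun_nonneg G A (p t) (fun i γ => (hsol.1 t ht0 i).1 γ)
      show -(∑ i, ∑ γ, q i γ * gfun G A (p t) i γ) - K * (2 * Wfun G A (p t)) ≤ 0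
      nlinarith [mul_nonneg hK0 hW]
  -- bootstrap
  have hboot : ∀ s : ℝ, 0 ≤ s → Dfun q (p s) + K * (Psi G A q - Psi G A (p s)) < m →
      (∀ i γ, |p s i γ - q i γ| < δ/2) →
      ∀ t, s ≤ t → (∀ i γ, |p t i γ - q i γ| ≤ δ/2) ∧
        Dfun q (p t) ≤ Dfun q (p s) + K * (Psi G A q - Psi G A (p s)) := by
    intro s hs hsm hsnear
    by_cases hBe : ∃ u, s ≤ u ∧ ¬ (∀ i γ, |p u i γ - q i γ| ≤ δ/2)
    · exfalso
      set B := {u : ℝ | s ≤ u ∧ ¬ (∀ i γ, |p u i γ - q i γ| ≤ δ/2)} with hBdef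
      have hBne : B.Nonempty := hBe
      have hBbdd : BddBelow B := ⟨s, fun u hu => hu.1⟩
      set t₀ := sInf B with ht₀def
      have ht₀s : s ≤ t₀ := le_csInf hBne fun u hu => hu.1
      have hgood : ∀ u, s ≤ u → u < t₀ → ∀ i γ, |p u i γ - q i γ| ≤ δ/2 := by
        intro u hsu hu
        by_contra hcon
        exact absurd (csInf_le hBbdd ⟨hsu, hcon⟩) (not_le.2 hu)
      have ht₀near : ∀ i γ, |p t₀ i γ - q i γ| ≤ δ/2 := by
        rcases eq_or_lt_of_le ht₀s with he | hlt
        · intro i γ; rw [← he]; exact (hsnear i γ).le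
        · intro i γ
          have hcont : ContinuousAt (fun u => |p u i γ - q i γ|) t₀ :=
            (((hsol.2 t₀ (hs.trans ht₀s) i γ).continuousAt).sub continuousAt_const).abs
          have htt : Tendsto (fun u => |p u i γ - q i γ|) (𝓝[<] t₀)
              (𝓝 (|p t₀ i γ - q i γ|)) := hcont.tendsto.mono_left nhdsWithin_le_nhds
          refine le_of_tendsto htt ?_
          filter_upwards [Ioo_mem_nhdsLT_of_mem (Set.mem_Ioc.2 ⟨hlt, le_rfl⟩)] with u hu
          exact hgood u hu.1.le hu.2 i γ
      have hDt₀' : ∀ u ∈ Set.Icc s t₀, ∀ i γ, |p u i γ - q i γ| ≤ δ/2 := by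
        intro u hu
        rcases eq_or_lt_of_le hu.2 with he | hlt
        · rw [he]; exact ht₀near
        · exact hgood u hu.1 hlt
      have hE := hEmono s t₀ hs ht₀s (fun u hu i γ => (hDt₀' u hu i γ).trans (by linarith))
      have hψ := hPsile t₀ (hs.trans ht₀s)
      have hKψ := mul_le_mul_of_nonneg_left hψ hK0
      have hDt₀ : Dfun q (p t₀) < m := by nlinarith
      have hstrict : ∀ i γ, |p t₀ i γ - q i γ| < δ/2 := hmod t₀ (hs.trans ht₀s) hDt₀
      have hev : ∀ᶠ u in 𝓝 t₀, ∀ i γ, |p u i γ - q i γ| ≤ δ/2 := by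
        have hev' : ∀ᶠ u in 𝓝 t₀, ∀ i γ, |p u i γ - q i γ| < δ/2 := by
          refine eventually_all.2 fun i => eventually_all.2 fun γ => ?_
          have hcont : ContinuousAt (fun u => |p u i γ - q i γ|) t₀ :=
            (((hsol.2 t₀ (hs.trans ht₀s) i γ).continuousAt).sub continuousAt_const).abs
          filter_upwards [hcont (Iio_mem_nhds (hstrict i γ))] with u hu
          exact hu
        filter_upwards [hev'] with u hu i γ
        exact (hu i γ).le
      obtain ⟨η, hη, hball⟩ := Metric.eventually_nhds_iff.1 hev
      have hfin : t₀ + η/2 ≤ sInf B := by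
        refine le_csInf hBne fun u hu => ?_
        by_contra hcon
        push_neg at hcon
        rcases le_or_gt u t₀ with h | h
        · exact hu.2 (hDt₀' u ⟨hu.1, h⟩)
        · refine hu.2 (hball ?_)
          rw [Real.dist_eq, abs_of_pos (by linarith)]
          linarith
      rw [← ht₀def] at hfin
      linarith
    · push_neg at hBe
      intro t hst
      have hE := hEmono s t hs hst (fun u hu i γ => (hBe u hu.1 i γ).trans (by linarith))
      have hψ := hPsile t (hs.trans hst)
      have hKψ := mul_le_mul_of_nonneg_left hψ hK0
      exact ⟨hBe t hst, by nlinarith⟩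
  -- D(p t) → 0
  have hDk : Tendsto (fun k => Dfun q (p (tk k))) atTop (𝓝 0) :=
    tendsto_Dfun_zero (fun i γ => (hqΔ i).1 γ) htendk
  have hPsik : Tendsto (fun k => Psi G A (p (tk k))) atTop (𝓝 (Psi G A q)) :=
    ((continuous_Psi G A).tendsto q).comp htendk
  have hRk : Tendsto (fun k => Psi G A q - Psi G A (p (tk k))) atTop (𝓝 0) := by
    have h := (tendsto_const_nhds (x := Psi G A q) (f := atTop (α := ℕ))).sub hPsik
    simpa using h
  have hcomb : Tendsto (fun k => Dfun q (p (tk k)) + K * (Psi G A q - Psi G A (p (tk k))))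
      atTop (𝓝 0) := by
    have h := hDk.add (hRk.const_mul K)
    simpa using h
  have hDto0 : ∀ ε : ℝ, 0 < ε → ∃ N : ℝ, 0 ≤ N ∧ ∀ t, N ≤ t → Dfun q (p t) < ε := by
    intro ε hε
    have hminpos : (0:ℝ) < min ε m := lt_min hε hmpos
    obtain ⟨k, hk1, _⟩ := ((hcomb.eventually (Iio_mem_nhds hminpos)).and
      (htkTop.eventually_ge_atTop 0)).exists
    have hs' : 0 ≤ tk k := htk0 k
    have hval : Dfun q (p (tk k)) + K * (Psi G A q - Psi G A (p (tk k))) < min ε m := hk1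
    have hR0 : 0 ≤ K * (Psi G A q - Psi G A (p (tk k))) :=
      mul_nonneg hK0 (sub_nonneg.2 (hPsile (tk k) hs'))
    have hnear : ∀ i γ, |p (tk k) i γ - q i γ| < δ/2 :=
      hmod (tk k) hs' (by have := min_le_right ε m; linarith)
    refine ⟨tk k, hs', fun t ht => ?_⟩
    have hb := hboot (tk k) hs' (lt_of_lt_of_le hval (min_le_right ε m)) hnear t ht
    have := min_le_left ε m
    linarith [hb.2]
  -- conclude coordinatewise convergence
  rw [tendsto_pi_nhds]
  intro i
  rw [tendsto_pi_nhds]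
  intro γ
  rw [Metric.tendsto_atTop]
  intro ε hε
  obtain ⟨m', hm'pos, hmod'⟩ := hmodex ε hε
  obtain ⟨N, hN0, hN⟩ := hDto0 m' hm'pos
  refine ⟨N, fun t ht => ?_⟩
  rw [Real.dist_eq]
  exact hmod' t (hN0.trans ht) (hN t ht) i γ
end

section
/- Let a network coordination game be played on a bipartite graph with parts V_left and V_right (every edge joins V_left to V_right), and suppose it has a fully mixed Nash equilibrium q (q_{iγ} > 0 for all i, γ, and u_{iγ}(q) = û_i(q) for all i, γ). Then along every replicator solution p(t) that remains in the interior of Δ, the quantity Σ_{i∈V_left} Σ_{γ} q_{iγ} ln p_{iγ}(t) − Σ_{i∈V_right} Σ_{γ} q_{iγ} ln p_{iγ}(t) is constant in t; equivalently, the difference between the sum over V_left and the sum over V_right of the cross entropies H(q_i, p_i(t)) (and hence of the Kullback–Leibler divergences KL(q_i ‖ p_i(t))) is invariant along trajectories. -/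
open Filter Topology Finset

variable {V : Type} [Fintype V] [DecidableEq V] {T : Type} [Fintype T] [DecidableEq T]

lemma edge_swap (G : SimpleGraph V) [DecidableRel G.Adj]
    (L : Finset V) (hbip : ∀ i j, G.Adj i j → (i ∈ L ↔ j ∉ L))
    (F : V → V → ℝ) :
    ∑ i ∈ L, ∑ j ∈ G.neighborFinset i, F i j
      = ∑ j ∈ Lᶜ, ∑ i ∈ G.neighborFinset j, F i j := by
  have hL : ∀ g : V → ℝ, ∑ i ∈ L, g i = ∑ i, if i ∈ L then g i else 0 := by
    intro g; rw [Finset.sum_ite_mem, Finset.univ_inter]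
  have hLc : ∀ g : V → ℝ, ∑ i ∈ Lᶜ, g i = ∑ i, if i ∈ Lᶜ then g i else 0 := by
    intro g; rw [Finset.sum_ite_mem, Finset.univ_inter]
  have hN : ∀ (i : V) (g : V → ℝ),
      ∑ j ∈ G.neighborFinset i, g j = ∑ j, if G.Adj i j then g j else 0 := by
    intro i g; rw [SimpleGraph.neighborFinset_eq_filter, Finset.sum_filter]
  have push : ∀ (c : Prop) [Decidable c] (g : V → ℝ),
      (if c then ∑ j, g j else 0) = ∑ j, if c then g j else 0 := by
    intro c _ g; split_ifs <;> simp
  rw [hL, hLc]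
  simp only [hN, push]
  rw [Finset.sum_comm]
  apply Finset.sum_congr rfl; intro j _
  apply Finset.sum_congr rfl; intro i _
  simp only [Finset.mem_compl]
  by_cases ha : G.Adj i j
  · have hb := hbip i j ha
    have ha' : G.Adj j i := ha.symm
    simp only [ha, ha', if_true]
    by_cases hi : i ∈ L
    · simp [hi, hb.mp hi]
    · have hj : j ∈ L := by by_contra hj; exact hi (hb.mpr hj)
      simp [hi, hj]
  · have ha' : ¬ G.Adj j i := fun h => ha h.symm
    simp [ha, ha']

lemma util_swap (G : SimpleGraph V) [DecidableRel G.Adj] (A : V → V → T → T → ℝ)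
    (hsymm : ∀ i j γ δ, A i j γ δ = A j i δ γ)
    (L : Finset V) (hbip : ∀ i j, G.Adj i j → (i ∈ L ↔ j ∉ L))
    (x y : V → T → ℝ) :
    ∑ i ∈ L, ∑ γ, y i γ * expUtil G A x i γ
      = ∑ j ∈ Lᶜ, ∑ δ, x j δ * expUtil G A y j δ := by
  have h1 : ∑ i ∈ L, ∑ γ, y i γ * expUtil G A x i γ
      = ∑ i ∈ L, ∑ j ∈ G.neighborFinset i, ∑ γ, ∑ δ, y i γ * (A i j γ δ * x j δ) := by
    apply Finset.sum_congr rfl; intro i _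
    simp only [expUtil, Finset.mul_sum]
    rw [Finset.sum_comm]
  rw [h1, edge_swap G L hbip]
  apply Finset.sum_congr rfl; intro j _
  simp only [expUtil, Finset.mul_sum]
  have inner : ∀ i : V, (∑ γ, ∑ δ, y i γ * (A i j γ δ * x j δ))
      = ∑ δ, ∑ γ, y i γ * (A i j γ δ * x j δ) := fun i => Finset.sum_comm
  simp only [inner]
  rw [Finset.sum_comm]
  apply Finset.sum_congr rfl; intro δ _
  apply Finset.sum_congr rfl; intro i _
  apply Finset.sum_congr rfl; intro γ _
  rw [hsymm i j γ δ]; ring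

lemma key_zero (G : SimpleGraph V) [DecidableRel G.Adj] (A : V → V → T → T → ℝ)
    (hsymm : ∀ i j γ δ, A i j γ δ = A j i δ γ)
    (L : Finset V) (hbip : ∀ i j, G.Adj i j → (i ∈ L ↔ j ∉ L))
    (q : V → T → ℝ) (hq1 : ∀ i, ∑ γ, q i γ = 1)
    (hqNash : ∀ i γ, expUtil G A q i γ = avgUtil G A q i)
    (x : V → T → ℝ) (hx1 : ∀ i, ∑ γ, x i γ = 1) :
    (∑ i ∈ L, ∑ γ, q i γ * (expUtil G A x i γ - avgUtil G A x i))
      - ∑ i ∈ Lᶜ, ∑ γ, q i γ * (expUtil G A x i γ - avgUtil G A x i) = 0 := by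
  have hbip' : ∀ i j, G.Adj i j → (i ∈ Lᶜ ↔ j ∉ Lᶜ) := by
    intro i j ha
    have := hbip i j ha
    simp only [Finset.mem_compl]
    tauto
  have hsplit : ∀ (M : Finset V), ∑ i ∈ M, ∑ γ, q i γ * (expUtil G A x i γ - avgUtil G A x i)
      = (∑ i ∈ M, ∑ γ, q i γ * expUtil G A x i γ) - ∑ i ∈ M, avgUtil G A x i := by
    intro M
    rw [← Finset.sum_sub_distrib]
    apply Finset.sum_congr rfl; intro i _
    simp only [mul_sub]
    rw [Finset.sum_sub_distrib, ← Finset.sum_mul, hq1]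
    ring
  have hcontr : ∀ (v : V → T → ℝ) (_ : ∀ i, ∑ γ, v i γ = 1) (M : Finset V),
      ∑ j ∈ M, ∑ δ, v j δ * expUtil G A q j δ = ∑ j ∈ M, avgUtil G A q j := by
    intro v hv M
    apply Finset.sum_congr rfl; intro j _
    simp only [hqNash, ← Finset.sum_mul, hv, one_mul]
  have hA : ∑ i ∈ L, ∑ γ, q i γ * expUtil G A x i γ = ∑ j ∈ Lᶜ, avgUtil G A q j := by
    rw [util_swap G A hsymm L hbip x q, hcontr x hx1]
  have hB : ∑ i ∈ Lᶜ, ∑ γ, q i γ * expUtil G A x i γ = ∑ j ∈ L, avgUtil G A q j := by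
    have := util_swap G A hsymm Lᶜ hbip' x q
    rw [compl_compl] at this
    rw [this, hcontr x hx1]
  have hC : ∑ i ∈ L, avgUtil G A x i = ∑ j ∈ Lᶜ, avgUtil G A x j := by
    have := util_swap G A hsymm L hbip x x
    simpa [avgUtil] using this
  have hD : ∑ i ∈ L, avgUtil G A q i = ∑ j ∈ Lᶜ, avgUtil G A q j := by
    have := util_swap G A hsymm L hbip q q
    simpa [avgUtil] using this
  rw [hsplit, hsplit, hA, hB]
  linarith

/-- **K-L / cross entropy invariant for bipartite network coordination games.**
Suppose the network coordination game is played on a bipartite graph, with parts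
`L` and `Lᶜ`, and has a fully mixed Nash equilibrium `q`. Then along every
replicator solution staying in the interior of `Δ`, the difference between the
left and right parts of `Σ_i Σ_γ q_{iγ} ln p_{iγ}(t)` is constant in `t`;
equivalently the corresponding differences of cross entropies `H(q_i, p_i(t))`
and of Kullback-Leibler divergences `KL(q_i ‖ p_i(t))` are invariant. -/
theorem bipartite_KL_invariant
    (G : SimpleGraph V) [DecidableRel G.Adj]
    (A : V → V → T → T → ℝ)
    (hsymm : ∀ i j γ δ, A i j γ δ = A j i δ γ)
    (L : Finset V) (hbip : ∀ i j, G.Adj i j → (i ∈ L ↔ j ∉ L))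
    (q : V → T → ℝ) (hqΔ : inSimplex q) (hqpos : ∀ i γ, 0 < q i γ)
    (hqNash : ∀ i γ, expUtil G A q i γ = avgUtil G A q i)
    (p : ℝ → V → T → ℝ)
    (hpΔ : ∀ t, inSimplex (p t)) (hppos : ∀ t i γ, 0 < p t i γ)
    (hode : ∀ t i γ, HasDerivAt (fun τ => p τ i γ)
      (p t i γ * (expUtil G A (p t) i γ - avgUtil G A (p t) i)) t) :
    (∀ t₁ t₂ : ℝ,
      ((∑ i ∈ L, ∑ γ, q i γ * Real.log (p t₁ i γ))
          - ∑ i ∈ Lᶜ, ∑ γ, q i γ * Real.log (p t₁ i γ)) =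
      ((∑ i ∈ L, ∑ γ, q i γ * Real.log (p t₂ i γ))
          - ∑ i ∈ Lᶜ, ∑ γ, q i γ * Real.log (p t₂ i γ))) ∧
    (∀ t₁ t₂ : ℝ,
      ((∑ i ∈ L, -∑ γ, q i γ * Real.log (p t₁ i γ))
          - ∑ i ∈ Lᶜ, -∑ γ, q i γ * Real.log (p t₁ i γ)) =
      ((∑ i ∈ L, -∑ γ, q i γ * Real.log (p t₂ i γ))
          - ∑ i ∈ Lᶜ, -∑ γ, q i γ * Real.log (p t₂ i γ))) ∧
    (∀ t₁ t₂ : ℝ,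
      ((∑ i ∈ L, ∑ γ, q i γ * Real.log (q i γ / p t₁ i γ))
          - ∑ i ∈ Lᶜ, ∑ γ, q i γ * Real.log (q i γ / p t₁ i γ)) =
      ((∑ i ∈ L, ∑ γ, q i γ * Real.log (q i γ / p t₂ i γ))
          - ∑ i ∈ Lᶜ, ∑ γ, q i γ * Real.log (q i γ / p t₂ i γ))) := by
  have hderiv : ∀ t, HasDerivAt (fun τ => (∑ i ∈ L, ∑ γ, q i γ * Real.log (p τ i γ))
      - ∑ i ∈ Lᶜ, ∑ γ, q i γ * Real.log (p τ i γ)) 0 t := by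
    intro t
    have hterm : ∀ i γ, HasDerivAt (fun τ => q i γ * Real.log (p τ i γ))
        (q i γ * (expUtil G A (p t) i γ - avgUtil G A (p t) i)) t := by
      intro i γ
      have h1 := (hode t i γ).log (ne_of_gt (hppos t i γ))
      have h2 : p t i γ * (expUtil G A (p t) i γ - avgUtil G A (p t) i) / p t i γ
          = expUtil G A (p t) i γ - avgUtil G A (p t) i := by
        exact mul_div_cancel_left₀ _ (ne_of_gt (hppos t i γ))
      rw [h2] at h1
      exact h1.const_mul _
    have hsum : ∀ M : Finset V,
        HasDerivAt (fun τ => ∑ i ∈ M, ∑ γ, q i γ * Real.log (p τ i γ))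
        (∑ i ∈ M, ∑ γ, q i γ * (expUtil G A (p t) i γ - avgUtil G A (p t) i)) t := by
      intro M
      exact HasDerivAt.fun_sum fun i _ => HasDerivAt.fun_sum fun γ _ => hterm i γ
    have hz := key_zero G A hsymm L hbip q (fun i => (hqΔ i).2) hqNash (p t)
      (fun i => ((hpΔ t) i).2)
    rw [← hz]
    exact (hsum L).sub (hsum Lᶜ)
  have hconst : ∀ t₁ t₂ : ℝ,
      ((∑ i ∈ L, ∑ γ, q i γ * Real.log (p t₁ i γ))
          - ∑ i ∈ Lᶜ, ∑ γ, q i γ * Real.log (p t₁ i γ)) =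
      ((∑ i ∈ L, ∑ γ, q i γ * Real.log (p t₂ i γ))
          - ∑ i ∈ Lᶜ, ∑ γ, q i γ * Real.log (p t₂ i γ)) :=
    is_const_of_deriv_eq_zero (fun t => (hderiv t).differentiableAt)
      (fun t => (hderiv t).deriv)
  refine ⟨hconst, ?_, ?_⟩
  · intro t₁ t₂
    simp only [Finset.sum_neg_distrib, neg_neg, sub_neg_eq_add, neg_add_eq_sub]
    linarith [hconst t₁ t₂]
  · intro t₁ t₂
    have hlog : ∀ (t : ℝ) (i : V) (γ : T), Real.log (q i γ / p t i γ)
        = Real.log (q i γ) - Real.log (p t i γ) :=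
      fun t i γ => Real.log_div (ne_of_gt (hqpos i γ)) (ne_of_gt (hppos t i γ))
    simp only [hlog, mul_sub, Finset.sum_sub_distrib]
    linarith [hconst t₁ t₂]
end
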